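/- Let $r$ be an even positive integer and let $u_1,\dots,u_r$ be distinct nonzero complex numbers with $u_i u_j \neq 1$ and $u_i^2 \neq 1$ for all $i,j$. Then for every $i$ with $1 \le i \le r$, $\sum_{j=1}^r \frac{1-u_i^2}{1-u_i u_j} (-u_j) \prod_{\ell \neq j} \frac{u_\ell u_j - 1}{u_j - u_\ell} = 1$. -/

import Mathlib

open Finset

/-- For `r` even and positive, and distinct nonzero complex numbers `u₁, …, u_r` with
`uᵢ uⱼ ≠ 1` and `uᵢ² ≠ 1`, one has, for every `i`,
`∑ⱼ (1 − uᵢ²)/(1 − uᵢ uⱼ) (−uⱼ) ∏_{ℓ ≠ j} (u_ℓ u_j − 1)/(u_j − u_ℓ) = 1`. -/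
theorem stmt3 {r : ℕ} (hr : Even r) (hpos : 0 < r) (u : Fin r → ℂ)
    (hinj : Function.Injective u)
    (h0 : ∀ i, u i ≠ 0) (h1 : ∀ i j, u i * u j ≠ 1) (hsq : ∀ i, u i ^ 2 ≠ 1)
    (i : Fin r) :
    ∑ j, (1 - u i ^ 2) / (1 - u i * u j) * (-u j) *
      ∏ ℓ ∈ univ.erase j, ((u ℓ * u j - 1) / (u j - u ℓ)) = 1 := by
  classical
  have hsub : ∀ j k : Fin r, j ≠ k → u j - u k ≠ 0 := fun j k h =>
    sub_ne_zero.mpr (fun e => h (hinj e))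
  have h1' : ∀ j k : Fin r, (1 : ℂ) - u j * u k ≠ 0 := fun j k =>
    sub_ne_zero.mpr (Ne.symm (h1 j k))
  have hneg1 : ((-1 : ℂ)) ^ r = 1 := hr.neg_one_pow
  -- the coefficients
  set c : Fin r → ℂ := fun j =>
    -u j * ∏ ℓ ∈ univ.erase j, ((u ℓ * u j - 1) / (u j - u ℓ)) with hc
  -- the polynomial
  set P : Polynomial ℂ :=
    (∑ j : Fin r, Polynomial.C (c j) *
        ((1 - Polynomial.X ^ 2) * ∏ k ∈ univ.erase j, (1 - Polynomial.C (u k) * Polynomial.X)))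
      - (∏ k : Fin r, (1 - Polynomial.C (u k) * Polynomial.X))
      + ∏ k : Fin r, (Polynomial.X - Polynomial.C (u k)) with hPdef
  -- degree bound
  have hd1 : ∀ a : ℂ, (1 - Polynomial.C a * Polynomial.X).natDegree ≤ 1 := by
    intro a; compute_degree
  have hdprod : ∀ s : Finset (Fin r),
      (∏ k ∈ s, (1 - Polynomial.C (u k) * Polynomial.X)).natDegree ≤ s.card := by
    intro s
    refine (Polynomial.natDegree_prod_le s _).trans ?_
    refine le_trans (Finset.sum_le_card_nsmul s _ 1 (fun k _ => hd1 (u k))) ?_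
    simp
  have hdeg : P.natDegree < r + 2 := by
    rw [hPdef]
    have hA : (∑ j : Fin r, Polynomial.C (c j) *
        ((1 - Polynomial.X ^ 2) * ∏ k ∈ univ.erase j,
          (1 - Polynomial.C (u k) * Polynomial.X))).natDegree ≤ r + 1 := by
      refine Polynomial.natDegree_sum_le_of_forall_le _ _ ?_
      intro j _
      refine (Polynomial.natDegree_mul_le).trans ?_
      have h2 : ((1 : Polynomial ℂ) - Polynomial.X ^ 2).natDegree ≤ 2 := by compute_degree
      have h3 := hdprod (univ.erase j)
      rw [Finset.card_erase_of_mem (mem_univ j), Finset.card_univ, Fintype.card_fin] at h3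
      have := Polynomial.natDegree_mul_le (p := (1 : Polynomial ℂ) - Polynomial.X ^ 2)
        (q := ∏ k ∈ univ.erase j, (1 - Polynomial.C (u k) * Polynomial.X))
      have h4 : (Polynomial.C (c j)).natDegree = 0 := Polynomial.natDegree_C _
      omega
    have hB := hdprod univ
    rw [Finset.card_univ, Fintype.card_fin] at hB
    have hC : (∏ k : Fin r, (Polynomial.X - Polynomial.C (u k))).natDegree ≤ r := by
      refine (Polynomial.natDegree_prod_le univ _).trans ?_
      refine le_trans (Finset.sum_le_card_nsmul univ _ 1
        (fun k _ => by simp [Polynomial.natDegree_X_sub_C])) ?_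
      simp
    refine lt_of_le_of_lt ((Polynomial.natDegree_add_le _ _).trans
      (max_le ((Polynomial.natDegree_sub_le _ _).trans
        (max_le hA (hB.trans (by omega)))) (hC.trans (by omega)))) (by omega)
  -- the root set
  set s : Finset ℂ := (univ.image fun k => (u k)⁻¹) ∪ {1, -1} with hs
  have hne1 : ∀ k : Fin r, (u k)⁻¹ ≠ 1 := by
    intro k h
    apply hsq k
    rw [inv_eq_iff_eq_inv] at h
    simp only [inv_one] at h
    rw [h]; norm_num
  have hnem1 : ∀ k : Fin r, (u k)⁻¹ ≠ -1 := by
    intro k h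
    apply hsq k
    rw [inv_eq_iff_eq_inv] at h
    have : u k = -1 := by rw [h]; norm_num
    rw [this]; norm_num
  have hcard : s.card = r + 2 := by
    have hdisj : Disjoint (univ.image fun k => (u k)⁻¹) ({1, -1} : Finset ℂ) := by
      rw [Finset.disjoint_right]
      intro x hx hx2
      simp only [Finset.mem_insert, Finset.mem_singleton] at hx
      simp only [Finset.mem_image, Finset.mem_univ, true_and] at hx2
      obtain ⟨k, hk⟩ := hx2
      rcases hx with h | h
      · exact hne1 k (hk.trans h)
      · exact hnem1 k (hk.trans h)
    rw [hs, Finset.card_union_of_disjoint hdisj,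
      Finset.card_image_of_injective _ (fun a b hab => hinj (by rwa [inv_inj] at hab)),
      Finset.card_univ, Fintype.card_fin,
      Finset.card_insert_of_notMem (by norm_num), Finset.card_singleton]
  -- evaluation at 1 and -1
  have hev1 : P.eval 1 = 0 := by
    rw [hPdef]
    simp [Polynomial.eval_finset_sum, Polynomial.eval_prod]
  have hevm1 : P.eval (-1) = 0 := by
    rw [hPdef]
    simp only [Polynomial.eval_add, Polynomial.eval_sub, Polynomial.eval_finset_sum,
      Polynomial.eval_mul, Polynomial.eval_prod, Polynomial.eval_one, Polynomial.eval_pow,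
      Polynomial.eval_X, Polynomial.eval_C]
    have e1 : ∀ k : Fin r, (-1 : ℂ) - u k = (-1) * (1 + u k) := fun k => by ring
    have e2 : ∀ k : Fin r, (1 : ℂ) - u k * (-1) = 1 + u k := fun k => by ring
    simp only [e1, e2]
    rw [Finset.prod_mul_distrib, Finset.prod_const, Finset.card_univ, Fintype.card_fin, hneg1]
    simp
  -- evaluation at (u k)⁻¹
  have hevinv : ∀ k : Fin r, P.eval (u k)⁻¹ = 0 := by
    intro k
    have hv := h0 k
    rw [hPdef]
    simp only [Polynomial.eval_add, Polynomial.eval_sub, Polynomial.eval_finset_sum,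
      Polynomial.eval_mul, Polynomial.eval_prod, Polynomial.eval_one, Polynomial.eval_pow,
      Polynomial.eval_X, Polynomial.eval_C]
    -- the full product vanishes
    have hfull : ∏ m : Fin r, ((1 : ℂ) - u m * (u k)⁻¹) = 0 :=
      Finset.prod_eq_zero (mem_univ k) (by field_simp; ring)
    -- the sum reduces to the term j = k
    have hsum : ∑ j : Fin r, c j * ((1 - ((u k)⁻¹) ^ 2) *
        ∏ m ∈ univ.erase j, (1 - u m * (u k)⁻¹)) =
        c k * ((1 - ((u k)⁻¹) ^ 2) * ∏ m ∈ univ.erase k, (1 - u m * (u k)⁻¹)) := by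
      refine Finset.sum_eq_single k ?_ (by simp)
      intro j _ hj
      have : ∏ m ∈ univ.erase j, ((1 : ℂ) - u m * (u k)⁻¹) = 0 :=
        Finset.prod_eq_zero (Finset.mem_erase.mpr ⟨Ne.symm hj, mem_univ k⟩) (by field_simp; ring)
      rw [this]; ring
    rw [hsum, hfull]
    -- key product computation
    have hkey : (∏ ℓ ∈ univ.erase k, ((u ℓ * u k - 1) / (u k - u ℓ))) *
        ∏ m ∈ univ.erase k, ((1 : ℂ) - u m * (u k)⁻¹) =
        (∏ m ∈ univ.erase k, (u m * u k - 1)) * ((u k)⁻¹) ^ (r - 1) := by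
      rw [← Finset.prod_mul_distrib]
      have : ∀ m ∈ univ.erase k, (u m * u k - 1) / (u k - u m) * (1 - u m * (u k)⁻¹)
          = (u m * u k - 1) * (u k)⁻¹ := by
        intro m hm
        have hmk : m ≠ k := (Finset.mem_erase.mp hm).1
        have := hsub k m (Ne.symm hmk)
        field_simp
        try ring
      rw [Finset.prod_congr rfl this, Finset.prod_mul_distrib, Finset.prod_const,
        Finset.card_erase_of_mem (mem_univ k), Finset.card_univ, Fintype.card_fin]
    have hthird : ∏ m : Fin r, ((u k)⁻¹ - u m) =
        ((u k * u k - 1) * ∏ m ∈ univ.erase k, (u m * u k - 1)) * ((u k)⁻¹) ^ r := by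
      have e1 : ∀ m ∈ (univ : Finset (Fin r)),
          (u k)⁻¹ - u m = (-1) * ((u m * u k - 1) * (u k)⁻¹) := by
        intro m _
        field_simp
        try ring
      rw [Finset.prod_congr rfl e1, Finset.prod_mul_distrib, Finset.prod_mul_distrib,
        Finset.prod_const, Finset.prod_const, Finset.card_univ, Fintype.card_fin, hneg1, one_mul,
        ← Finset.mul_prod_erase univ (fun m => u m * u k - 1) (mem_univ k)]
    rw [hthird]
    have hrw : c k * ((1 - ((u k)⁻¹) ^ 2) * ∏ m ∈ univ.erase k, (1 - u m * (u k)⁻¹)) =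
        -u k * (1 - ((u k)⁻¹) ^ 2) *
          ((∏ ℓ ∈ univ.erase k, ((u ℓ * u k - 1) / (u k - u ℓ))) *
            ∏ m ∈ univ.erase k, (1 - u m * (u k)⁻¹)) := by
      simp only [hc]; ring
    rw [hrw, hkey]
    have hr1 : r - 1 + 1 = r := by omega
    have hpow : ((u k)⁻¹) ^ r = ((u k)⁻¹) ^ (r - 1) * (u k)⁻¹ := by
      rw [← pow_succ, hr1]
    rw [hpow]
    have hv2 : u k * (u k)⁻¹ = 1 := mul_inv_cancel₀ hv
    field_simp
    ring
  -- P = 0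
  have hP0 : P = 0 := by
    refine Polynomial.eq_zero_of_natDegree_lt_card_of_eval_eq_zero' P s ?_ (by omega)
    intro x hx
    rw [hs] at hx
    simp only [Finset.mem_union, Finset.mem_image, Finset.mem_univ, true_and,
      Finset.mem_insert, Finset.mem_singleton] at hx
    rcases hx with ⟨k, rfl⟩ | rfl | rfl
    · exact hevinv k
    · exact hev1
    · exact hevm1
  -- evaluate at u i
  have hevi := congrArg (Polynomial.eval (u i)) hP0
  rw [hPdef] at hevi
  simp only [Polynomial.eval_add, Polynomial.eval_sub, Polynomial.eval_finset_sum,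
    Polynomial.eval_mul, Polynomial.eval_prod, Polynomial.eval_one, Polynomial.eval_pow,
    Polynomial.eval_X, Polynomial.eval_C, Polynomial.eval_zero] at hevi
  have hzero : ∏ k : Fin r, (u i - u k) = 0 :=
    Finset.prod_eq_zero (mem_univ i) (by ring)
  rw [hzero, add_zero, sub_eq_zero] at hevi
  -- hevi : ∑ j, c j * ((1 - u i ^ 2) * ∏ m ∈ erase j, (1 - u m * u i)) = ∏ m, (1 - u m * u i)
  set D : ℂ := ∏ m : Fin r, (1 - u m * u i) with hD
  have hDne : D ≠ 0 := Finset.prod_ne_zero_iff.mpr (fun m _ => h1' m i)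
  have hmain : (∑ j : Fin r, (1 - u i ^ 2) / (1 - u i * u j) * (-u j) *
      ∏ ℓ ∈ univ.erase j, ((u ℓ * u j - 1) / (u j - u ℓ))) * D = 1 * D := by
    rw [one_mul, Finset.sum_mul]
    calc ∑ j : Fin r, ((1 - u i ^ 2) / (1 - u i * u j) * (-u j) *
          ∏ ℓ ∈ univ.erase j, ((u ℓ * u j - 1) / (u j - u ℓ))) * D
        = ∑ j : Fin r, c j * ((1 - u i ^ 2) * ∏ m ∈ univ.erase j, (1 - u m * u i)) := by
          refine Finset.sum_congr rfl ?_
          intro j _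
          have hDj : D = (1 - u j * u i) * ∏ m ∈ univ.erase j, (1 - u m * u i) := by
            rw [hD, ← Finset.mul_prod_erase univ (fun m => 1 - u m * u i) (mem_univ j)]
          rw [hDj]
          simp only [hc]
          have hij := h1' i j
          have hBB : (1 : ℂ) - u j * u i = 1 - u i * u j := by ring
          rw [hBB]
          generalize (∏ ℓ ∈ univ.erase j, ((u ℓ * u j - 1) / (u j - u ℓ))) = Q
          generalize (∏ m ∈ univ.erase j, ((1 : ℂ) - u m * u i)) = R
          field_simp
      _ = D := hevi
  exact mul_right_cancel₀ hDne hmain
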